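/- Let M ∈ ℝ, α ∈ ℝ, u₁ < u₂, and let r̄, f : [u₁,u₂] → ℝ be C¹ functions with r̄(u) > M and ν̄(u) := r̄'(u) < 0 for all u ∈ [u₁,u₂]. Then the Hardy-type identity ((α+1)²/4) ∫_{u₁}^{u₂} (r̄−M)^α f² (−ν̄) du + ∫_{u₁}^{u₂} ((r̄−M)^α/(−ν̄)) ((r̄−M) f' − ((α+1)/2)(−ν̄) f)² du = ∫_{u₁}^{u₂} ((r̄−M)^{α+2}/(−ν̄)) (f')² du + ((α+1)/2) ((r̄−M)^{α+1} f²)(u₁) − ((α+1)/2) ((r̄−M)^{α+1} f²)(u₂) holds. -/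

import Mathlib

open MeasureTheory intervalIntegral

/-- The Hardy-type identity along ingoing null segments: for
`C¹` functions `r̄, f` on `[u₁, u₂]` with `r̄ > M` and `ν̄ = r̄' < 0`,
`((α+1)²/4) ∫ (r̄-M)^α f² (-ν̄) du
   + ∫ ((r̄-M)^α/(-ν̄)) ((r̄-M) f' - ((α+1)/2)(-ν̄) f)² du
 = ∫ ((r̄-M)^(α+2)/(-ν̄)) (f')² du
   + ((α+1)/2)((r̄-M)^(α+1) f²)(u₁) - ((α+1)/2)((r̄-M)^(α+1) f²)(u₂)`. -/
theorem hardy_identity_horizon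
    (M α u₁ u₂ : ℝ) (h12 : u₁ < u₂) (rb rb' f f' : ℝ → ℝ)
    (hrb : ∀ u ∈ Set.Icc u₁ u₂, HasDerivWithinAt rb (rb' u) (Set.Icc u₁ u₂) u)
    (hf : ∀ u ∈ Set.Icc u₁ u₂, HasDerivWithinAt f (f' u) (Set.Icc u₁ u₂) u)
    (hrb' : ContinuousOn rb' (Set.Icc u₁ u₂))
    (hf' : ContinuousOn f' (Set.Icc u₁ u₂))
    (hgt : ∀ u ∈ Set.Icc u₁ u₂, M < rb u)
    (hneg : ∀ u ∈ Set.Icc u₁ u₂, rb' u < 0) :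
    (α + 1) ^ 2 / 4 * (∫ u in u₁..u₂, (rb u - M) ^ α * f u ^ 2 * (-rb' u))
      + (∫ u in u₁..u₂,
          (rb u - M) ^ α / (-rb' u)
            * ((rb u - M) * f' u - (α + 1) / 2 * (-rb' u) * f u) ^ 2)
    = (∫ u in u₁..u₂, (rb u - M) ^ (α + 2) / (-rb' u) * f' u ^ 2)
      + (α + 1) / 2 * ((rb u₁ - M) ^ (α + 1) * f u₁ ^ 2)
      - (α + 1) / 2 * ((rb u₂ - M) ^ (α + 1) * f u₂ ^ 2) := by
  have hle : u₁ ≤ u₂ := h12.le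
  have huIcc : Set.uIcc u₁ u₂ = Set.Icc u₁ u₂ := Set.uIcc_of_le hle
  have hrbc : ContinuousOn rb (Set.Icc u₁ u₂) :=
    fun u hu => (hrb u hu).continuousWithinAt
  have hfc : ContinuousOn f (Set.Icc u₁ u₂) :=
    fun u hu => (hf u hu).continuousWithinAt
  have hpos : ∀ u ∈ Set.Icc u₁ u₂, (0:ℝ) < rb u - M :=
    fun u hu => sub_pos.mpr (hgt u hu)
  have hne : ∀ u ∈ Set.Icc u₁ u₂, rb u - M ≠ 0 :=
    fun u hu => (hpos u hu).ne'
  have hνne : ∀ u ∈ Set.Icc u₁ u₂, rb' u ≠ 0 :=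
    fun u hu => (hneg u hu).ne
  set g : ℝ → ℝ := fun u => (rb u - M) ^ (α + 1) * f u ^ 2 with hg_def
  set g' : ℝ → ℝ := fun u =>
    ((α + 1) * (rb u - M) ^ α * rb' u) * f u ^ 2
      + (rb u - M) ^ (α + 1) * (2 * f u * f' u) with hg'_def
  have hRc : ContinuousOn (fun u => rb u - M) (Set.Icc u₁ u₂) := hrbc.sub continuousOn_const
  have hRp : ∀ p : ℝ, ContinuousOn (fun u => (rb u - M) ^ p) (Set.Icc u₁ u₂) :=
    fun p => hRc.rpow_const (fun u hu => Or.inl (hne u hu))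
  have hgc : ContinuousOn g (Set.Icc u₁ u₂) := (hRp (α+1)).mul (hfc.pow 2)
  have hg'c : ContinuousOn g' (Set.Icc u₁ u₂) :=
    ((((continuousOn_const.mul (hRp α)).mul hrb').mul (hfc.pow 2))).add
      ((hRp (α+1)).mul ((continuousOn_const.mul hfc).mul hf'))
  have hgderiv : ∀ u ∈ Set.Ioo u₁ u₂, HasDerivAt g (g' u) u := by
    intro u hu
    have huI : u ∈ Set.Icc u₁ u₂ := Set.Ioo_subset_Icc_self hu
    have hmem : Set.Icc u₁ u₂ ∈ nhds u := Icc_mem_nhds hu.1 hu.2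
    have hrbd : HasDerivAt rb (rb' u) u := ((hrb u huI).hasDerivAt hmem)
    have hfd : HasDerivAt f (f' u) u := ((hf u huI).hasDerivAt hmem)
    have hRd : HasDerivAt (fun u => rb u - M) (rb' u) u := hrbd.sub_const M
    have h1 : HasDerivAt (fun u => (rb u - M) ^ (α + 1))
        ((α + 1) * (rb u - M) ^ α * rb' u) u := by
      have h := hRd.rpow_const (p := α + 1) (Or.inl (hne u huI))
      rw [add_sub_cancel_right] at h
      convert h using 1
      ring
    have h2 : HasDerivAt (fun u => f u ^ 2) (2 * f u * f' u) u := by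
      have h : HasDerivAt (fun u => f u ^ 2) (((2:ℕ):ℝ) * f u ^ (2 - 1) * f' u) u := hfd.fun_pow 2
      convert h using 1
      push_cast
      ring
    exact h1.mul h2
  have hint_g' : IntervalIntegrable g' volume u₁ u₂ := by
    apply ContinuousOn.intervalIntegrable; rwa [huIcc]
  have hFTC : ∫ u in u₁..u₂, g' u = g u₂ - g u₁ :=
    integral_eq_sub_of_hasDerivAt_of_le hle hgc hgderiv hint_g'
  set F1 : ℝ → ℝ := fun u => (rb u - M) ^ α * f u ^ 2 * (-rb' u) with hF1
  set F2 : ℝ → ℝ := fun u =>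
    (rb u - M) ^ α / (-rb' u) * ((rb u - M) * f' u - (α + 1) / 2 * (-rb' u) * f u) ^ 2 with hF2
  set F3 : ℝ → ℝ := fun u => (rb u - M) ^ (α + 2) / (-rb' u) * f' u ^ 2 with hF3
  have hF1c : ContinuousOn F1 (Set.Icc u₁ u₂) :=
    ((hRp α).mul (hfc.pow 2)).mul hrb'.neg
  have hF2c : ContinuousOn F2 (Set.Icc u₁ u₂) := by
    apply ContinuousOn.mul
    · exact (hRp α).div hrb'.neg (fun u hu => neg_ne_zero.mpr (hνne u hu))
    · exact ((hRc.mul hf').sub ((continuousOn_const.mul hrb'.neg).mul hfc)).pow 2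
  have hF3c : ContinuousOn F3 (Set.Icc u₁ u₂) :=
    ((hRp (α+2)).div hrb'.neg (fun u hu => neg_ne_zero.mpr (hνne u hu))).mul (hf'.pow 2)
  have hint1 : IntervalIntegrable F1 volume u₁ u₂ := by
    apply ContinuousOn.intervalIntegrable; rwa [huIcc]
  have hint2 : IntervalIntegrable F2 volume u₁ u₂ := by
    apply ContinuousOn.intervalIntegrable; rwa [huIcc]
  have hint3 : IntervalIntegrable F3 volume u₁ u₂ := by
    apply ContinuousOn.intervalIntegrable; rwa [huIcc]
  have hpt : Set.EqOn (fun u => (α + 1) ^ 2 / 4 * F1 u + F2 u)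
      (fun u => F3 u + (-((α + 1) / 2)) * g' u) (Set.uIcc u₁ u₂) := by
    rw [huIcc]
    intro u hu
    have hR : (0:ℝ) < rb u - M := hpos u hu
    have hν : rb' u ≠ 0 := hνne u hu
    have e1 : (rb u - M) ^ (α + 1) = (rb u - M) ^ α * (rb u - M) := by
      rw [Real.rpow_add hR, Real.rpow_one]
    have e2 : (rb u - M) ^ (α + 2) = (rb u - M) ^ α * (rb u - M) ^ 2 := by
      rw [Real.rpow_add hR, show (2:ℝ) = ((2:ℕ):ℝ) by norm_num, Real.rpow_natCast]
    have hw : rb' u * (-rb' u)⁻¹ = -1 := by field_simp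
    simp only [hF1, hF2, hF3, hg'_def, e1, e2, div_eq_mul_inv]
    linear_combination (2 * ((α + 1) / 2) * (rb u - M) ^ α * (rb u - M) * f u * f' u
      + ((α + 1) / 2) ^ 2 * (rb u - M) ^ α * f u ^ 2 * rb' u) * hw
  have key : (α + 1) ^ 2 / 4 * (∫ u in u₁..u₂, F1 u) + (∫ u in u₁..u₂, F2 u)
      = (∫ u in u₁..u₂, F3 u) + (-((α + 1) / 2)) * (∫ u in u₁..u₂, g' u) := by
    rw [← intervalIntegral.integral_const_mul,
      ← intervalIntegral.integral_add (hint1.const_mul _) hint2,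
      ← intervalIntegral.integral_const_mul,
      ← intervalIntegral.integral_add hint3 (hint_g'.const_mul _)]
    exact intervalIntegral.integral_congr hpt
  rw [key, hFTC]
  have e₁ : g u₁ = (rb u₁ - M) ^ (α + 1) * f u₁ ^ 2 := rfl
  have e₂ : g u₂ = (rb u₂ - M) ^ (α + 1) * f u₂ ^ 2 := rfl
  rw [e₁, e₂]
  ring
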